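/- Upper bound for the explicit system scheme: let ψ be a saturation with saturation level α and let γ = inf_{s ∈ [0,α)} (α − s)/(α·ψ(s)). If ρ_i ≥ 0 entrywise and σ_i ≤ α for all i ∈ ℤ, and Δt ≤ γ·Δx/(4‖u‖), then the updated values satisfy σ_i' := Σ_{p=1}^P (ρ_i')_p ≤ α for all i ∈ ℤ. -/
import Mathlib


/-- A *saturation* with saturation level `α > 0`: a continuous non-increasing function
`ψ : [0,∞) → ℝ` with `ψ α = 0` and `(α − s)·ψ s > 0` for every `s ≥ 0`, `s ≠ α`. -/
def IsSaturation (ψ : ℝ → ℝ) (α : ℝ) : Prop :=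
  0 < α ∧ ContinuousOn ψ (Set.Ici 0) ∧
    (∀ s₁ s₂, 0 ≤ s₁ → s₁ ≤ s₂ → ψ s₂ ≤ ψ s₁) ∧
    ψ α = 0 ∧ ∀ s, 0 ≤ s → s ≠ α → 0 < (α - s) * ψ s

/-- The minmod limiter. -/
noncomputable def minmod (a b c : ℝ) : ℝ :=
  if 0 < a ∧ 0 < b ∧ 0 < c then min a (min b c)
  else if a < 0 ∧ b < 0 ∧ c < 0 then max a (max b c)
  else 0

/-- Minmod mmSlope `(ρ_x)_i`. -/
noncomputable def mmSlope (θ Δx : ℝ) (ρ : ℤ → ℝ) (i : ℤ) : ℝ :=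
  minmod (θ * (ρ (i + 1) - ρ i) / Δx) ((ρ (i + 1) - ρ (i - 1)) / (2 * Δx))
    (θ * (ρ i - ρ (i - 1)) / Δx)

/-- East reconstruction `ρ_i^E`. -/
noncomputable def recE (θ Δx : ℝ) (ρ : ℤ → ℝ) (i : ℤ) : ℝ :=
  ρ i + Δx / 2 * mmSlope θ Δx ρ i

/-- West reconstruction `ρ_i^W`. -/
noncomputable def recW (θ Δx : ℝ) (ρ : ℤ → ℝ) (i : ℤ) : ℝ :=
  ρ i - Δx / 2 * mmSlope θ Δx ρ i


/-- Total density `σ_i = Σ_p (ρ_i)_p`. -/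
noncomputable def totalDensity {P : ℕ} (ρ : ℤ → Fin P → ℝ) (i : ℤ) : ℝ :=
  ∑ p, ρ i p

/-- Entrywise east reconstruction `(ρ_i^E)_p`. -/
noncomputable def recEV (θ Δx : ℝ) {P : ℕ} (ρ : ℤ → Fin P → ℝ) (i : ℤ) (p : Fin P) : ℝ :=
  recE θ Δx (fun j => ρ j p) i

/-- Entrywise west reconstruction `(ρ_i^W)_p`. -/
noncomputable def recWV (θ Δx : ℝ) {P : ℕ} (ρ : ℤ → Fin P → ℝ) (i : ℤ) (p : Fin P) : ℝ :=
  recW θ Δx (fun j => ρ j p) i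

/-- Numerical flux `(F_{i+1/2})_p` of the explicit system scheme (with `θ = 2`);
`u i p` denotes `(u_{i+1/2})_p` and the saturation is evaluated on the reconstructions
of the total density `σ`. -/
noncomputable def numFluxV (ψ : ℝ → ℝ) (Δx : ℝ) {P : ℕ} (ρ u : ℤ → Fin P → ℝ)
    (i : ℤ) (p : Fin P) : ℝ :=
  recEV 2 Δx ρ i p * ψ (recW 2 Δx (totalDensity ρ) (i + 1)) * max (u i p) 0 +
    recWV 2 Δx ρ (i + 1) p * ψ (recE 2 Δx (totalDensity ρ) i) * min (u i p) 0

/-- Updated cell values `(ρ_i')_p` of the explicit system scheme. -/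
noncomputable def updateExplicitV (ψ : ℝ → ℝ) (Δx Δt : ℝ) {P : ℕ} (ρ u : ℤ → Fin P → ℝ)
    (i : ℤ) (p : Fin P) : ℝ :=
  ρ i p - Δt / Δx * (numFluxV ψ Δx ρ u i p - numFluxV ψ Δx ρ u (i - 1) p)

/-- The CFL constant `γ = inf_{s ∈ [0,α)} (α − s)/(α·ψ s)`. -/
noncomputable def gammaCFL (ψ : ℝ → ℝ) (α : ℝ) : ℝ :=
  sInf ((fun s => (α - s) / (α * ψ s)) '' Set.Ico 0 α)

lemma minmod_cases (a b c : ℝ) :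
    minmod a b c = 0 ∨ (0 < minmod a b c ∧ minmod a b c ≤ a ∧ minmod a b c ≤ c) ∨
      (minmod a b c < 0 ∧ a ≤ minmod a b c ∧ c ≤ minmod a b c) := by
  unfold minmod
  split_ifs with h1 h2
  · exact Or.inr (Or.inl ⟨lt_min h1.1 (lt_min h1.2.1 h1.2.2), min_le_left _ _,
      le_trans (min_le_right _ _) (min_le_right _ _)⟩)
  · exact Or.inr (Or.inr ⟨max_lt h2.1 (max_lt h2.2.1 h2.2.2), le_max_left _ _,
      le_trans (le_max_right _ _) (le_max_right _ _)⟩)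
  · exact Or.inl rfl

lemma mmSlope_cases (Δx : ℝ) (ρ : ℤ → ℝ) (i : ℤ) :
    mmSlope 2 Δx ρ i = 0 ∨
      (0 < mmSlope 2 Δx ρ i ∧ mmSlope 2 Δx ρ i ≤ 2 * (ρ (i + 1) - ρ i) / Δx ∧
        mmSlope 2 Δx ρ i ≤ 2 * (ρ i - ρ (i - 1)) / Δx) ∨
      (mmSlope 2 Δx ρ i < 0 ∧ 2 * (ρ (i + 1) - ρ i) / Δx ≤ mmSlope 2 Δx ρ i ∧
        2 * (ρ i - ρ (i - 1)) / Δx ≤ mmSlope 2 Δx ρ i) := by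
  unfold mmSlope; exact minmod_cases _ _ _

lemma recE_bounds {Δx : ℝ} (hΔx : 0 < Δx) (ρ : ℤ → ℝ) (i : ℤ) :
    min (ρ i) (ρ (i + 1)) ≤ recE 2 Δx ρ i ∧ recE 2 Δx ρ i ≤ max (ρ i) (ρ (i + 1)) := by
  unfold recE
  rcases mmSlope_cases Δx ρ i with h | ⟨h0, ha, _⟩ | ⟨h0, ha, _⟩
  · rw [h]; constructor
    · simpa using min_le_left (ρ i) (ρ (i + 1))
    · simpa using le_max_left (ρ i) (ρ (i + 1))
  · have ha' : mmSlope 2 Δx ρ i * Δx ≤ 2 * (ρ (i + 1) - ρ i) := (le_div_iff₀ hΔx).mp ha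
    constructor
    · refine le_trans (min_le_left _ _) ?_; nlinarith
    · refine le_trans ?_ (le_max_right _ _); nlinarith
  · have ha' : 2 * (ρ (i + 1) - ρ i) ≤ mmSlope 2 Δx ρ i * Δx := (div_le_iff₀ hΔx).mp ha
    constructor
    · refine le_trans (min_le_right _ _) ?_; nlinarith
    · refine le_trans ?_ (le_max_left _ _); nlinarith

lemma recW_bounds {Δx : ℝ} (hΔx : 0 < Δx) (ρ : ℤ → ℝ) (i : ℤ) :
    min (ρ (i - 1)) (ρ i) ≤ recW 2 Δx ρ i ∧ recW 2 Δx ρ i ≤ max (ρ (i - 1)) (ρ i) := by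
  unfold recW
  rcases mmSlope_cases Δx ρ i with h | ⟨h0, _, hc⟩ | ⟨h0, _, hc⟩
  · rw [h]; constructor
    · simpa using min_le_right (ρ (i - 1)) (ρ i)
    · simpa using le_max_right (ρ (i - 1)) (ρ i)
  · have hc' : mmSlope 2 Δx ρ i * Δx ≤ 2 * (ρ i - ρ (i - 1)) := (le_div_iff₀ hΔx).mp hc
    constructor
    · refine le_trans (min_le_left _ _) ?_; nlinarith
    · refine le_trans ?_ (le_max_right _ _); nlinarith
  · have hc' : 2 * (ρ i - ρ (i - 1)) ≤ mmSlope 2 Δx ρ i * Δx := (div_le_iff₀ hΔx).mp hc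
    constructor
    · refine le_trans (min_le_right _ _) ?_; nlinarith
    · refine le_trans ?_ (le_max_left _ _); nlinarith

lemma recE_add_recW (θ Δx : ℝ) (ρ : ℤ → ℝ) (i : ℤ) :
    recE θ Δx ρ i + recW θ Δx ρ i = 2 * ρ i := by
  unfold recE recW; ring
section MainProof

set_option maxHeartbeats 2000000 in
theorem explicit_system_upper_bound
    (ψ : ℝ → ℝ) (α : ℝ) (hψ : IsSaturation ψ α)
    (Δx Δt : ℝ) (hΔx : 0 < Δx) (hΔt : 0 < Δt)
    (P : ℕ) (ρ u : ℤ → Fin P → ℝ) (U : ℝ) (hU : 0 < U)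
    (hu : ∀ i p, |u i p| ≤ U)
    (hρ : ∀ i p, 0 ≤ ρ i p) (hσ : ∀ i, totalDensity ρ i ≤ α)
    (hCFL : Δt ≤ gammaCFL ψ α * Δx / (4 * U)) :
    ∀ i, (∑ p, updateExplicitV ψ Δx Δt ρ u i p) ≤ α := by
  obtain ⟨hα, _, hmono, hψα, hpos⟩ := hψ
  set σ := totalDensity ρ with hσdef
  set γ := gammaCFL ψ α with hγdef
  -- basic facts
  have hσ0 : ∀ j, 0 ≤ σ j := fun j => Finset.sum_nonneg (fun p _ => hρ j p)
  have hψnn : ∀ s, 0 ≤ s → s ≤ α → 0 ≤ ψ s := fun s h0 h1 => hψα ▸ hmono s α h0 h1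
  have hbdd : BddBelow ((fun s => (α - s) / (α * ψ s)) '' Set.Ico 0 α) := by
    refine ⟨0, ?_⟩
    rintro x ⟨s, ⟨h0, h1⟩, rfl⟩
    have hψs : 0 < ψ s := by
      have := hpos s h0 (ne_of_lt h1); nlinarith
    have : 0 < α * ψ s := by positivity
    exact div_nonneg (by linarith) this.le
  have hγ0 : 0 < γ := by
    have h1 : 0 < γ * Δx / (4 * U) := lt_of_lt_of_le hΔt hCFL
    rw [div_pos_iff] at h1
    rcases h1 with ⟨h1, _⟩ | ⟨_, h2⟩
    · nlinarith
    · nlinarith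
  have hkey : ∀ s, 0 ≤ s → s ≤ α → γ * (α * ψ s) ≤ α - s := by
    intro s h0 h1
    rcases eq_or_lt_of_le h1 with rfl | h1
    · simp [hψα]
    · have hψs : 0 < ψ s := by
        have := hpos s h0 (ne_of_lt h1); nlinarith
      have hden : 0 < α * ψ s := by positivity
      have hle : γ ≤ (α - s) / (α * ψ s) := by
        rw [hγdef, gammaCFL]
        exact csInf_le hbdd ⟨s, ⟨h0, h1⟩, rfl⟩
      calc γ * (α * ψ s) ≤ ((α - s) / (α * ψ s)) * (α * ψ s) :=
            mul_le_mul_of_nonneg_right hle hden.le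
        _ = α - s := div_mul_cancel₀ _ hden.ne'
  -- CFL in multiplied form
  have hlU : Δt / Δx * U ≤ γ / 4 := by
    have hC : Δt * (4 * U) ≤ γ * Δx := (le_div_iff₀ (by positivity)).mp hCFL
    rw [div_mul_eq_mul_div, div_le_div_iff₀ hΔx (by norm_num)]
    nlinarith
  intro i
  set l := Δt / Δx with hl
  have hl0 : 0 ≤ l := by positivity
  -- reconstruction facts for σ
  have hσE : ∀ j, 0 ≤ recE 2 Δx σ j ∧ recE 2 Δx σ j ≤ α := by
    intro j
    obtain ⟨h1, h2⟩ := recE_bounds hΔx σ j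
    exact ⟨le_trans (le_min (hσ0 j) (hσ0 (j + 1))) h1,
      le_trans h2 (max_le (hσ j) (hσ (j + 1)))⟩
  have hσW : ∀ j, 0 ≤ recW 2 Δx σ j ∧ recW 2 Δx σ j ≤ α := by
    intro j
    obtain ⟨h1, h2⟩ := recW_bounds hΔx σ j
    exact ⟨le_trans (le_min (hσ0 (j - 1)) (hσ0 j)) h1,
      le_trans h2 (max_le (hσ (j - 1)) (hσ j))⟩
  set ψE := ψ (recE 2 Δx σ i) with hψE
  set ψW := ψ (recW 2 Δx σ i) with hψW
  have hψE0 : 0 ≤ ψE := hψnn _ (hσE i).1 (hσE i).2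
  have hψW0 : 0 ≤ ψW := hψnn _ (hσW i).1 (hσW i).2
  set A := ∑ p, numFluxV ψ Δx ρ u i p with hA
  set B := ∑ p, numFluxV ψ Δx ρ u (i - 1) p with hB
  -- sum formula
  have hsum : (∑ p, updateExplicitV ψ Δx Δt ρ u i p) = σ i - l * (A - B) := by
    rw [hA, hB, hl, hσdef]
    unfold updateExplicitV totalDensity
    rw [Finset.sum_sub_distrib, ← Finset.mul_sum, Finset.sum_sub_distrib]
  -- bound A from below
  have hAbound : -(2 * α * U * ψE) ≤ A := by
    have hAp : ∀ p : Fin P, -(U * ψE * (ρ i p + ρ (i + 1) p)) ≤ numFluxV ψ Δx ρ u i p := by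
      intro p
      unfold numFluxV recEV recWV
      have he : 0 ≤ recE 2 Δx (fun j => ρ j p) i :=
        le_trans (le_min (hρ i p) (hρ (i + 1) p)) (recE_bounds hΔx (fun j => ρ j p) i).1
      obtain ⟨hw1, hw2⟩ := recW_bounds hΔx (fun j => ρ j p) (i + 1)
      simp only [add_sub_cancel_right] at hw1 hw2
      have hw0 : 0 ≤ recW 2 Δx (fun j => ρ j p) (i + 1) :=
        le_trans (le_min (hρ i p) (hρ (i + 1) p)) hw1
      have hwle : recW 2 Δx (fun j => ρ j p) (i + 1) ≤ ρ i p + ρ (i + 1) p :=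
        le_trans hw2 (max_le (by linarith [hρ (i + 1) p]) (by linarith [hρ i p]))
      have hψWn : 0 ≤ ψ (recW 2 Δx σ (i + 1)) := hψnn _ (hσW (i + 1)).1 (hσW (i + 1)).2
      have humax : 0 ≤ max (u i p) 0 := le_max_right _ _
      have hmin1 : -U ≤ min (u i p) 0 := le_min (neg_le_of_abs_le (hu i p)) (by linarith)
      have hψEσ : ψ (recE 2 Δx (totalDensity ρ) i) = ψE := by rw [hψE, hσdef]
      rw [hψEσ]
      nlinarith [mul_nonneg (mul_nonneg he hψWn) humax,
        mul_nonneg (mul_nonneg hw0 hψE0) (by linarith : 0 ≤ min (u i p) 0 + U),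
        mul_nonneg (mul_nonneg hU.le hψE0) (sub_nonneg.mpr hwle)]
    calc -(2 * α * U * ψE) ≤ ∑ p, -(U * ψE * (ρ i p + ρ (i + 1) p)) := by
          have : (∑ p, -(U * ψE * (ρ i p + ρ (i + 1) p)))
              = -(U * ψE * (σ i + σ (i + 1))) := by
            rw [hσdef]; unfold totalDensity
            simp only [Finset.sum_neg_distrib, ← Finset.mul_sum, Finset.sum_add_distrib]
          rw [this]
          have h2α : σ i + σ (i + 1) ≤ 2 * α := by linarith [hσ i, hσ (i + 1)]
          nlinarith [mul_nonneg hU.le hψE0]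
      _ ≤ A := Finset.sum_le_sum (fun p _ => hAp p)
  -- bound B from above
  have hBbound : B ≤ 2 * α * U * ψW := by
    have hBp : ∀ p : Fin P, numFluxV ψ Δx ρ u (i - 1) p ≤ U * ψW * (ρ (i - 1) p + ρ i p) := by
      intro p
      unfold numFluxV recEV recWV
      simp only [sub_add_cancel]
      obtain ⟨he1, he2⟩ := recE_bounds hΔx (fun j => ρ j p) (i - 1)
      simp only [sub_add_cancel] at he1 he2
      have he0 : 0 ≤ recE 2 Δx (fun j => ρ j p) (i - 1) :=
        le_trans (le_min (hρ (i - 1) p) (hρ i p)) he1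
      have hele : recE 2 Δx (fun j => ρ j p) (i - 1) ≤ ρ (i - 1) p + ρ i p :=
        le_trans he2 (max_le (by linarith [hρ i p]) (by linarith [hρ (i - 1) p]))
      have hw0 : 0 ≤ recW 2 Δx (fun j => ρ j p) i :=
        le_trans (le_min (hρ (i - 1) p) (hρ i p)) (recW_bounds hΔx (fun j => ρ j p) i).1
      have hψEn : 0 ≤ ψ (recE 2 Δx σ (i - 1)) := hψnn _ (hσE (i - 1)).1 (hσE (i - 1)).2
      have humax2 : max (u (i - 1) p) 0 ≤ U := max_le (le_of_abs_le (hu (i - 1) p)) hU.le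
      have humax0 : 0 ≤ max (u (i - 1) p) 0 := le_max_right _ _
      have hmin0 : min (u (i - 1) p) 0 ≤ 0 := min_le_right _ _
      have hψWσ : ψ (recW 2 Δx (totalDensity ρ) i) = ψW := by rw [hψW, hσdef]
      have hψEσ : ψ (recE 2 Δx (totalDensity ρ) (i - 1)) = ψ (recE 2 Δx σ (i - 1)) := by
        rw [hσdef]
      rw [hψWσ, hψEσ]
      nlinarith [mul_nonneg (mul_nonneg he0 hψW0) (sub_nonneg.mpr humax2),
        mul_nonneg (mul_nonneg he0 hψW0) humax0,
        mul_nonneg (mul_nonneg hU.le hψW0) (sub_nonneg.mpr hele),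
        mul_nonneg (mul_nonneg hw0 hψEn) (neg_nonneg.mpr hmin0)]
    calc B ≤ ∑ p, U * ψW * (ρ (i - 1) p + ρ i p) := Finset.sum_le_sum (fun p _ => hBp p)
      _ = U * ψW * (σ (i - 1) + σ i) := by
          rw [hσdef]; unfold totalDensity
          rw [← Finset.mul_sum, Finset.sum_add_distrib]
      _ ≤ 2 * α * U * ψW := by
          nlinarith [mul_nonneg hU.le hψW0, hσ (i - 1), hσ i]
  -- key inequalities at i
  have hkeyE : γ * (α * ψE) ≤ α - recE 2 Δx σ i := hkey _ (hσE i).1 (hσE i).2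
  have hkeyW : γ * (α * ψW) ≤ α - recW 2 Δx σ i := hkey _ (hσW i).1 (hσW i).2
  have hEW : recE 2 Δx σ i + recW 2 Δx σ i = 2 * σ i := recE_add_recW 2 Δx σ i
  rw [hsum]
  nlinarith [mul_nonneg hl0 (by linarith : (0:ℝ) ≤ A + 2 * α * U * ψE),
    mul_nonneg hl0 (by linarith : (0:ℝ) ≤ 2 * α * U * ψW - B),
    mul_nonneg (sub_nonneg.mpr hlU) (mul_nonneg (mul_nonneg (by norm_num : (0:ℝ) ≤ 2) hα.le) hψE0),
    mul_nonneg (sub_nonneg.mpr hlU) (mul_nonneg (mul_nonneg (by norm_num : (0:ℝ) ≤ 2) hα.le) hψW0),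
    hkeyE, hkeyW, hEW]

end MainProof
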